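/- Let B be a finite type with |B| ≥ 2, let C be a finite type, let H be a subgroup of Perm C acting on C in the natural way, and let G = P((ℤ → B), H). (1) If ℓ is the derived length of H, i.e. the ℓ-th term of the derived series of H is trivial and the (ℓ−1)-st is not, then the derived length of G is ℓ + 1: the (ℓ+1)-st term of the derived series of G is trivial and the ℓ-th is not. (2) If H is not solvable, then G is not virtually solvable: G has no solvable subgroup of finite index. -/

import Mathlib

open Function

/-- The shift map on `ℤ → A`. -/
def shiftMap (A : Type*) : (ℤ → A) → (ℤ → A) := fun x i => x (i + 1)

/-- The shift map as a permutation of `ℤ → A`. -/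
def shiftPerm (A : Type*) : Equiv.Perm (ℤ → A) where
  toFun := shiftMap A
  invFun x i := x (i - 1)
  left_inv x := funext fun i => by simp [shiftMap]
  right_inv x := funext fun i => by simp [shiftMap]

/-- Finite types carry the discrete topology. -/
instance fintypeDiscreteTopology (A : Type*) [Fintype A] : TopologicalSpace A := ⊥

/-- The automorphism group of the full shift `A^ℤ`: shift-commuting self-homeomorphisms of
`ℤ → A`, as a subgroup of the permutation group of `ℤ → A`. -/
def FullShiftAut (A : Type*) [Fintype A] : Subgroup (Equiv.Perm (ℤ → A)) where
  carrier := { f | Continuous ⇑f ∧ Continuous ⇑f.symm ∧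
      ∀ x, f (shiftMap A x) = shiftMap A (f x) }
  one_mem' := ⟨continuous_id, continuous_id, fun _ => rfl⟩
  mul_mem' := by
    rintro f g ⟨hf1, hf2, hf3⟩ ⟨hg1, hg2, hg3⟩
    refine ⟨?_, ?_, fun x => ?_⟩
    · exact hf1.comp hg1
    · exact hg2.comp hf2
    · show f (g (shiftMap A x)) = shiftMap A (f (g x))
      rw [hg3, hf3]
  inv_mem' := by
    rintro f ⟨hf1, hf2, hf3⟩
    refine ⟨hf2, hf1, fun x => ?_⟩
    apply f.injective
    rw [Equiv.Perm.inv_def, Equiv.apply_symm_apply, hf3, Equiv.apply_symm_apply]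

/-- The symbol permutation determined by a permutation of the alphabet. -/
def symbolPerm {A : Type*} (π : Equiv.Perm A) : Equiv.Perm (ℤ → A) :=
  Equiv.piCongrRight fun _ => π

/-- The partial shift on the first track. -/
def partialShift₁ (B C : Type*) : Equiv.Perm (ℤ → B × C) where
  toFun x i := ((x (i + 1)).1, (x i).2)
  invFun x i := ((x (i - 1)).1, (x i).2)
  left_inv x := funext fun i => by simp
  right_inv x := funext fun i => by simp

/-- The partial shift on the second track. -/
def partialShift₂ (B C : Type*) : Equiv.Perm (ℤ → B × C) where
  toFun x i := ((x i).1, (x (i + 1)).2)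
  invFun x i := ((x i).1, (x (i - 1)).2)
  left_inv x := funext fun i => by simp
  right_inv x := funext fun i => by simp

/-- `PAut[B;C]`: the subgroup of the automorphism group of `(B × C)^ℤ` generated by the two
partial shifts and all symbol permutations. -/
def PAut (B C : Type*) : Subgroup (Equiv.Perm (ℤ → B × C)) :=
  Subgroup.closure
    ({partialShift₁ B C, partialShift₂ B C} ∪ Set.range (symbolPerm (A := B × C)))

attribute [local instance] Classical.propDecidable

/-- The shift on `(ℤ → B) × A`: `ŝ(x, a) = (σ x, a)`. -/
noncomputable def shiftFst (B A : Type*) : Equiv.Perm ((ℤ → B) × A) :=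
  (shiftPerm B).prodCongr (Equiv.refl A)

/-- The controlled action `ctrl(g, C')` on `(ℤ → B) × A`: apply `g` on the second coordinate
exactly when the first coordinate lies in `C'`. -/
noncomputable def ctrlFull {B : Type*} {G : Type*} [Group G] {A : Type*} [MulAction G A]
    (g : G) (C' : Set (ℤ → B)) : Equiv.Perm ((ℤ → B) × A) where
  toFun p := if p.1 ∈ C' then (p.1, g • p.2) else p
  invFun p := if p.1 ∈ C' then (p.1, g⁻¹ • p.2) else p
  left_inv := by rintro ⟨x, a⟩; by_cases h : x ∈ C' <;> simp [h]
  right_inv := by rintro ⟨x, a⟩; by_cases h : x ∈ C' <;> simp [h]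

/-- The group `P(ℤ → B, G)` (with `X = ℤ → B` the full shift): generated by the shift together
with the controlled maps `ctrl(g, C')` over basic cylinders `C'`. -/
noncomputable def PGroupFull (B : Type*) (G : Type*) [Group G] (A : Type*) [MulAction G A] :
    Subgroup (Equiv.Perm ((ℤ → B) × A)) :=
  Subgroup.closure
    ({shiftFst B A} ∪ {f | ∃ (g : G) (i : ℤ) (s : B), f = ctrlFull g {x : ℤ → B | x i = s}})


section Stmt17Aux

open Equiv Subgroup
open scoped commutatorElement

/-! ### Generic lemmas about mapped derived series -/

private lemma stmt17_dmap_zero {G : Type*} [Group G] (L : Subgroup G) :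
    Subgroup.map L.subtype (derivedSeries ↥L 0) = L := by
  rw [derivedSeries_zero, ← MonoidHom.range_eq_map, Subgroup.range_subtype]

private lemma stmt17_dmap_succ {G : Type*} [Group G] (L : Subgroup G) (n : ℕ) :
    Subgroup.map L.subtype (derivedSeries ↥L (n + 1)) =
      ⁅Subgroup.map L.subtype (derivedSeries ↥L n),
        Subgroup.map L.subtype (derivedSeries ↥L n)⁆ := by
  rw [derivedSeries_succ, Subgroup.map_commutator]

/-! ### Fiberwise evaluation lemmas -/

private lemma stmt17_inv_eval {B C : Type} {u : Equiv.Perm ((ℤ → B) × C)} {x : ℤ → B}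
    {g : Equiv.Perm C} (h : ∀ a, u (x, a) = (x, g a)) (a : C) :
    u⁻¹ (x, a) = (x, g⁻¹ a) := by
  have h2 : u (x, g⁻¹ a) = (x, a) := by rw [h]; simp
  calc u⁻¹ (x, a) = u⁻¹ (u (x, g⁻¹ a)) := by rw [h2]
    _ = (x, g⁻¹ a) := Equiv.symm_apply_apply u _

private lemma stmt17_comm_eval {B C : Type} {u v : Equiv.Perm ((ℤ → B) × C)} {x : ℤ → B}
    {g h : Equiv.Perm C} (hu : ∀ a, u (x, a) = (x, g a)) (hv : ∀ a, v (x, a) = (x, h a))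
    (a : C) : ⁅u, v⁆ (x, a) = (x, ⁅g, h⁆ a) := by
  rw [commutatorElement_def, commutatorElement_def]
  simp only [Equiv.Perm.mul_apply]
  rw [stmt17_inv_eval hv, stmt17_inv_eval hu, hv, hu]

/-! ### The shift as a power -/

private def stmt17_prodFstHom (B C : Type) :
    Equiv.Perm (ℤ → B) →* Equiv.Perm ((ℤ → B) × C) where
  toFun e := e.prodCongr (Equiv.refl C)
  map_one' := Equiv.ext fun p => rfl
  map_mul' a b := Equiv.ext fun p => rfl

private lemma stmt17_shiftFst_zpow (B C : Type) (m : ℤ) (p : (ℤ → B) × C) :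
    ((shiftFst B C) ^ m) p = ((shiftPerm B ^ m) p.1, p.2) := by
  have h : shiftFst B C = stmt17_prodFstHom B C (shiftPerm B) := rfl
  rw [h, ← map_zpow]
  rfl

end Stmt17Aux
section Stmt17Aux2

open Equiv Subgroup
open scoped commutatorElement

variable {B C : Type}

/-- The subgroup of fiberwise permutations with fibers in `K`. -/
private def stmt17_FibS (B : Type) (K : Subgroup (Equiv.Perm C)) :
    Subgroup (Equiv.Perm ((ℤ → B) × C)) where
  carrier := {e | ∀ x : ℤ → B, ∃ k ∈ K, ∀ a : C, e (x, a) = (x, k a)}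
  one_mem' := fun x => ⟨1, K.one_mem, fun a => rfl⟩
  mul_mem' := by
    rintro e f he hf x
    obtain ⟨kf, hkf, hf'⟩ := hf x
    obtain ⟨ke, hke, he'⟩ := he x
    exact ⟨ke * kf, K.mul_mem hke hkf, fun a => by
      simp [Equiv.Perm.mul_apply, hf', he']⟩
  inv_mem' := by
    intro e he x
    obtain ⟨k, hk, he'⟩ := he x
    exact ⟨k⁻¹, K.inv_mem hk, stmt17_inv_eval he'⟩

private lemma stmt17_mem_FibS {K : Subgroup (Equiv.Perm C)} {e : Equiv.Perm ((ℤ → B) × C)} :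
    e ∈ stmt17_FibS B K ↔ ∀ x : ℤ → B, ∃ k ∈ K, ∀ a : C, e (x, a) = (x, k a) := Iff.rfl

private lemma stmt17_FibS_mono {K K' : Subgroup (Equiv.Perm C)} (h : K ≤ K') :
    stmt17_FibS B K ≤ stmt17_FibS B K' := by
  intro e he x
  obtain ⟨k, hk, h'⟩ := he x
  exact ⟨k, h hk, h'⟩

private lemma stmt17_FibS_bot : stmt17_FibS B (⊥ : Subgroup (Equiv.Perm C)) ≤ ⊥ := by
  intro e he
  rw [Subgroup.mem_bot]
  apply Equiv.ext
  rintro ⟨x, a⟩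
  obtain ⟨k, hk, h'⟩ := he x
  rw [Subgroup.mem_bot] at hk
  subst hk
  simpa using h' a

private lemma stmt17_comm_FibS (K : Subgroup (Equiv.Perm C)) :
    ⁅stmt17_FibS B K, stmt17_FibS B K⁆ ≤ stmt17_FibS B ⁅K, K⁆ := by
  rw [Subgroup.commutator_le]
  intro e he f hf x
  obtain ⟨k, hk, he'⟩ := he x
  obtain ⟨m, hm, hf'⟩ := hf x
  exact ⟨⁅k, m⁆, Subgroup.commutator_mem_commutator hk hm, stmt17_comm_eval he' hf'⟩

private lemma stmt17_sConj (K : Subgroup (Equiv.Perm C)) (m : ℤ)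
    {e : Equiv.Perm ((ℤ → B) × C)} (he : e ∈ stmt17_FibS B K) :
    (shiftFst B C) ^ m * e * ((shiftFst B C) ^ m)⁻¹ ∈ stmt17_FibS B K := by
  intro x
  obtain ⟨k, hk, he'⟩ := he ((shiftPerm B ^ (-m)) x)
  refine ⟨k, hk, fun a => ?_⟩
  have hinv : ((shiftFst B C) ^ m)⁻¹ (x, a) = ((shiftPerm B ^ (-m)) x, a) := by
    rw [← zpow_neg, stmt17_shiftFst_zpow]
  have hback : (shiftPerm B ^ m) ((shiftPerm B ^ (-m)) x) = x := by
    rw [← Equiv.Perm.mul_apply, ← zpow_add]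
    simp
  simp only [Equiv.Perm.mul_apply]
  rw [hinv, he' a, stmt17_shiftFst_zpow, hback]

variable [Fintype C] (H : Subgroup (Equiv.Perm C))

/-- Elements that are a power of the shift times a fiberwise map with fibers in `H`. -/
private def stmt17_MS : Subgroup (Equiv.Perm ((ℤ → B) × C)) where
  carrier := {e | ∃ m : ℤ, (shiftFst B C) ^ m * e ∈ stmt17_FibS B H}
  one_mem' := ⟨0, by simpa using (stmt17_FibS B H).one_mem⟩
  mul_mem' := by
    rintro a b ⟨m, hm⟩ ⟨n, hn⟩
    refine ⟨m + n, ?_⟩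
    have key : (shiftFst B C) ^ (m + n) * (a * b) =
        ((shiftFst B C) ^ n * ((shiftFst B C) ^ m * a) * ((shiftFst B C) ^ n)⁻¹) *
          ((shiftFst B C) ^ n * b) := by
      rw [zpow_add]
      group
    rw [key]
    exact mul_mem (stmt17_sConj H n hm) hn
  inv_mem' := by
    rintro a ⟨m, hm⟩
    refine ⟨-m, ?_⟩
    have key : (shiftFst B C) ^ (-m) * a⁻¹ =
        (shiftFst B C) ^ (-m) * ((shiftFst B C) ^ m * a)⁻¹ * ((shiftFst B C) ^ (-m))⁻¹ := by
      rw [zpow_neg]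
      group
    rw [key]
    exact stmt17_sConj H (-m) (inv_mem hm)

variable [Fintype B]

private lemma stmt17_ctrl_mem_FibS (g : ↥H) (S : Set (ℤ → B)) :
    ctrlFull (A := C) g S ∈ stmt17_FibS B H := by
  intro x
  by_cases hx : x ∈ S
  · exact ⟨(g : Equiv.Perm C), g.2, fun a => by
      simp [ctrlFull, hx, Subgroup.smul_def, Equiv.Perm.smul_def]⟩
  · exact ⟨1, H.one_mem, fun a => by simp [ctrlFull, hx]⟩

private lemma stmt17_PGroup_le_MS : PGroupFull B ↥H C ≤ stmt17_MS H := by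
  rw [PGroupFull, Subgroup.closure_le]
  rintro f (rfl | ⟨g, i, s, rfl⟩)
  · exact ⟨-1, by simpa using (stmt17_FibS B H).one_mem⟩
  · exact ⟨0, by simpa using stmt17_ctrl_mem_FibS H g _⟩

private lemma stmt17_comm_MS {g h : Equiv.Perm ((ℤ → B) × C)}
    (hg : g ∈ stmt17_MS (B := B) H) (hh : h ∈ stmt17_MS (B := B) H) :
    ⁅g, h⁆ ∈ stmt17_FibS B H := by
  obtain ⟨k, hk⟩ := hg
  obtain ⟨j, hj⟩ := hh
  set s := shiftFst B C with hs
  set u := s ^ k * g with hu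
  set v := s ^ j * h with hv
  have key : ⁅g, h⁆ =
      s ^ (-j) * ((s ^ (-k) * ((s ^ j * u * (s ^ j)⁻¹) * v * u⁻¹) * (s ^ (-k))⁻¹) * v⁻¹) *
        (s ^ (-j))⁻¹ := by
    rw [commutatorElement_def, hu, hv]
    simp only [zpow_neg]
    group
  rw [key]
  refine stmt17_sConj H (-j) (mul_mem (stmt17_sConj H (-k) ?_) (inv_mem hj))
  exact mul_mem (mul_mem (stmt17_sConj H j hk) hj) (inv_mem hk)

/-- Upper bound: the `(n+1)`-st derived series of `P` is fiberwise with fibers in the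
`n`-th derived series of `H`. -/
private lemma stmt17_DD_le_Fib (n : ℕ) :
    Subgroup.map (PGroupFull B ↥H C).subtype (derivedSeries ↥(PGroupFull B ↥H C) (n + 1)) ≤
      stmt17_FibS B (Subgroup.map H.subtype (derivedSeries ↥H n)) := by
  induction n with
  | zero =>
    rw [stmt17_dmap_succ, stmt17_dmap_zero, stmt17_dmap_zero, Subgroup.commutator_le]
    intro a ha b hb
    exact stmt17_comm_MS H (stmt17_PGroup_le_MS H ha) (stmt17_PGroup_le_MS H hb)
  | succ n ih =>
    rw [stmt17_dmap_succ, stmt17_dmap_succ H]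
    calc ⁅Subgroup.map (PGroupFull B ↥H C).subtype (derivedSeries ↥(PGroupFull B ↥H C) (n+1)),
          Subgroup.map (PGroupFull B ↥H C).subtype (derivedSeries ↥(PGroupFull B ↥H C) (n+1))⁆ ≤
        ⁅stmt17_FibS B (Subgroup.map H.subtype (derivedSeries ↥H n)),
          stmt17_FibS B (Subgroup.map H.subtype (derivedSeries ↥H n))⁆ :=
      Subgroup.commutator_mono ih ih
      _ ≤ _ := stmt17_comm_FibS _

end Stmt17Aux2
section Stmt17Aux3

open Equiv Subgroup
open scoped commutatorElement

variable {B C : Type} [Fintype B] [Fintype C] (H : Subgroup (Equiv.Perm C))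

/-- Permutations in (the image of) the `n`-th derived series of `P(ℤ → B, H)` acting as a
given permutation `g` of `C` over the window `x (-1) = b₀, x 0 = b₁`. -/
private def stmt17_QGroup (b₀ b₁ : B) (n : ℕ) : Subgroup (Equiv.Perm C) where
  carrier := {g | ∃ u ∈ Subgroup.map (PGroupFull B ↥H C).subtype
      (derivedSeries ↥(PGroupFull B ↥H C) n),
      ∀ x : ℤ → B, x (-1) = b₀ → x 0 = b₁ → ∀ a : C, u (x, a) = (x, g a)}
  one_mem' := ⟨1, one_mem _, fun x _ _ a => rfl⟩
  mul_mem' := by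
    rintro g h ⟨u, hu, hu'⟩ ⟨v, hv, hv'⟩
    refine ⟨u * v, mul_mem hu hv, fun x h1 h2 a => ?_⟩
    rw [Equiv.Perm.mul_apply, hv' x h1 h2 a, hu' x h1 h2 (h a)]
    rfl
  inv_mem' := by
    rintro g ⟨u, hu, hu'⟩
    exact ⟨u⁻¹, inv_mem hu, fun x h1 h2 => stmt17_inv_eval (hu' x h1 h2)⟩

private lemma stmt17_Q_base {b₀ b₁ : B} (hb : b₀ ≠ b₁) (g : ↥H) :
    (g : Equiv.Perm C) ∈ stmt17_QGroup H b₀ b₁ 1 := by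
  refine ⟨⁅shiftFst B C, ctrlFull (A := C) g {x : ℤ → B | x 0 = b₀}⁆, ?_, ?_⟩
  · rw [stmt17_dmap_succ, stmt17_dmap_zero]
    refine Subgroup.commutator_mem_commutator ?_ ?_
    · exact Subgroup.subset_closure (Or.inl rfl)
    · exact Subgroup.subset_closure (Or.inr ⟨g, 0, b₀, rfl⟩)
  · intro x h1 h2 a
    rw [commutatorElement_def]
    simp only [Equiv.Perm.mul_apply]
    have hc : (ctrlFull (A := C) g {x : ℤ → B | x 0 = b₀})⁻¹ (x, a) = (x, a) := by
      have hmem : x ∉ {x : ℤ → B | x 0 = b₀} := by simp [h2, hb.symm]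
      show (ctrlFull (A := C) g {x : ℤ → B | x 0 = b₀}).symm (x, a) = (x, a)
      simp only [ctrlFull, Equiv.coe_fn_symm_mk]
      rw [if_neg hmem]
    rw [hc]
    have hsinv : (shiftFst B C)⁻¹ (x, a) = ((fun i => x (i - 1)), a) := rfl
    rw [hsinv]
    have hmem2 : (fun i => x (i - 1)) ∈ {x : ℤ → B | x 0 = b₀} := by
      show x (0 - 1) = b₀
      simpa using h1
    have hctrl : (ctrlFull (A := C) g {x : ℤ → B | x 0 = b₀}) ((fun i => x (i - 1)), a) =
        ((fun i => x (i - 1)), (g : Equiv.Perm C) a) := by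
      show (if ((fun i => x (i - 1)) ∈ {x : ℤ → B | x 0 = b₀}) then
          ((fun i => x (i - 1)), g • a) else ((fun i => x (i - 1)), a)) = _
      rw [if_pos hmem2, Subgroup.smul_def, Equiv.Perm.smul_def]
    rw [hctrl]
    show (shiftMap B (fun i => x (i - 1)), (g : Equiv.Perm C) a) = (x, (g : Equiv.Perm C) a)
    have : shiftMap B (fun i => x (i - 1)) = x := by
      funext i
      simp [shiftMap]
    rw [this]

private lemma stmt17_Q_main {b₀ b₁ : B} (hb : b₀ ≠ b₁) (n : ℕ) :
    ∀ g : ↥H, g ∈ derivedSeries ↥H n → (g : Equiv.Perm C) ∈ stmt17_QGroup H b₀ b₁ (n + 1) := by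
  induction n with
  | zero => exact fun g _ => stmt17_Q_base H hb g
  | succ n ih =>
    intro g hg
    rw [derivedSeries_succ] at hg
    have hle : ⁅derivedSeries ↥H n, derivedSeries ↥H n⁆ ≤
        (stmt17_QGroup H b₀ b₁ (n + 2)).comap H.subtype := by
      rw [Subgroup.commutator_le]
      intro p hp q hq
      rw [Subgroup.mem_comap]
      obtain ⟨u, hu, hu'⟩ := ih p hp
      obtain ⟨v, hv, hv'⟩ := ih q hq
      have hcoe : (H.subtype ⁅p, q⁆ : Equiv.Perm C) =
          ⁅(p : Equiv.Perm C), (q : Equiv.Perm C)⁆ := by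
        simp [commutatorElement_def]
      rw [hcoe]
      refine ⟨⁅u, v⁆, ?_, fun x h1 h2 => stmt17_comm_eval (hu' x h1 h2) (hv' x h1 h2)⟩
      rw [stmt17_dmap_succ]
      exact Subgroup.commutator_mem_commutator hu hv
    exact hle hg

end Stmt17Aux3
section Stmt17Aux4

open Equiv Subgroup
open scoped commutatorElement

variable {B C : Type} [Fintype B] [Fintype C] (H : Subgroup (Equiv.Perm C))

private lemma stmt17_ctrl_apply (g : ↥H) (S : Set (ℤ → B)) (p : (ℤ → B) × C) :
    ctrlFull (A := C) g S p = if p.1 ∈ S then (p.1, g • p.2) else p := rfl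

private lemma stmt17_ctrl_inv (g : ↥H) (S : Set (ℤ → B)) :
    (ctrlFull (A := C) g S)⁻¹ = ctrlFull (A := C) g⁻¹ S := rfl

private lemma stmt17_ctrl_one (S : Set (ℤ → B)) :
    ctrlFull (A := C) (1 : ↥H) S = 1 := by
  apply Equiv.ext
  intro p
  rw [stmt17_ctrl_apply]
  split <;> simp

private lemma stmt17_ctrl_mul (g h : ↥H) (S : Set (ℤ → B)) :
    ctrlFull (A := C) g S * ctrlFull (A := C) h S = ctrlFull (A := C) (g * h) S := by
  apply Equiv.ext
  rintro ⟨x, a⟩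
  by_cases hx : x ∈ S <;>
    simp [Equiv.Perm.mul_apply, stmt17_ctrl_apply, hx, mul_smul]

private lemma stmt17_ctrl_commutator (g h : ↥H) (S T : Set (ℤ → B)) :
    ⁅ctrlFull (A := C) g S, ctrlFull (A := C) h T⁆ = ctrlFull (A := C) ⁅g, h⁆ (S ∩ T) := by
  apply Equiv.ext
  rintro ⟨x, a⟩
  rw [commutatorElement_def]
  simp only [Equiv.Perm.mul_apply, stmt17_ctrl_inv, stmt17_ctrl_apply]
  by_cases hS : x ∈ S <;> by_cases hT : x ∈ T <;>
    simp [hS, hT, Set.mem_inter_iff, commutatorElement_def, mul_smul]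

/-- The subgroup of elements `g` of `H` such that `ctrl(g, S)` lies in `P(ℤ → B, H)`. -/
private def stmt17_ctrlGrp (S : Set (ℤ → B)) : Subgroup ↥H where
  carrier := {g : ↥H | ctrlFull (A := C) g S ∈ PGroupFull B ↥H C}
  one_mem' := by
    show ctrlFull (A := C) (1 : ↥H) S ∈ PGroupFull B ↥H C
    rw [stmt17_ctrl_one]
    exact one_mem _
  mul_mem' := by
    intro a b ha hb
    show ctrlFull (A := C) (a * b) S ∈ PGroupFull B ↥H C
    rw [← stmt17_ctrl_mul]
    exact mul_mem ha hb
  inv_mem' := by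
    intro a ha
    show ctrlFull (A := C) a⁻¹ S ∈ PGroupFull B ↥H C
    rw [← stmt17_ctrl_inv]
    exact inv_mem ha

private lemma stmt17_ctrl_cyl (P' : Subgroup ↥H) (hperf : ⁅P', P'⁆ = P') (I : Finset ℤ) :
    I.Nonempty → ∀ y : ℤ → B, ∀ g : ↥H, g ∈ P' →
      ctrlFull (A := C) g {x : ℤ → B | ∀ i ∈ I, x i = y i} ∈ PGroupFull B ↥H C := by
  induction I using Finset.induction_on with
  | empty =>
    rintro ⟨j, hj⟩
    simp at hj
  | @insert j I hjI ih =>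
    intro _ y g hg
    by_cases hI : I.Nonempty
    · have hset : {x : ℤ → B | ∀ i ∈ insert j I, x i = y i} =
          {x : ℤ → B | ∀ i ∈ I, x i = y i} ∩ {x : ℤ → B | x j = y j} := by
        ext x
        simp [Finset.forall_mem_insert, and_comm]
      rw [hset]
      have hle : P' ≤ stmt17_ctrlGrp H
          ({x : ℤ → B | ∀ i ∈ I, x i = y i} ∩ {x : ℤ → B | x j = y j}) := by
        conv_lhs => rw [← hperf]
        rw [Subgroup.commutator_le]
        intro p hp q hq
        show ctrlFull (A := C) ⁅p, q⁆
            ({x : ℤ → B | ∀ i ∈ I, x i = y i} ∩ {x : ℤ → B | x j = y j}) ∈ PGroupFull B ↥H C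
        rw [← stmt17_ctrl_commutator]
        have h1 : ctrlFull (A := C) p {x : ℤ → B | ∀ i ∈ I, x i = y i} ∈
            PGroupFull B ↥H C := ih hI y p hp
        have h2 : ctrlFull (A := C) q {x : ℤ → B | x j = y j} ∈ PGroupFull B ↥H C :=
          Subgroup.subset_closure (Or.inr ⟨q, j, y j, rfl⟩)
        rw [commutatorElement_def]
        exact mul_mem (mul_mem (mul_mem h1 h2) (inv_mem h1)) (inv_mem h2)
      exact hle hg
    · rw [Finset.not_nonempty_iff_eq_empty] at hI
      subst hI
      have hset : {x : ℤ → B | ∀ i ∈ insert j (∅ : Finset ℤ), x i = y i} =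
          {x : ℤ → B | x j = y j} := by
        ext x
        simp
      rw [hset]
      exact Subgroup.subset_closure (Or.inr ⟨g, j, y j, rfl⟩)

/-- If `H` is not solvable, it contains a nontrivial perfect subgroup. -/
private lemma stmt17_exists_perfect (hns : ¬ IsSolvable ↥H) :
    ∃ P' : Subgroup ↥H, ⁅P', P'⁆ = P' ∧ P' ≠ ⊥ := by
  have hne : ∀ n, derivedSeries ↥H n ≠ ⊥ := fun n h => hns ⟨n, h⟩
  have hstab : ∃ n, derivedSeries ↥H (n + 1) = derivedSeries ↥H n := by
    by_contra hcon
    push_neg at hcon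
    have hlt : ∀ n, Nat.card (derivedSeries ↥H (n + 1)) < Nat.card (derivedSeries ↥H n) := by
      intro n
      have hle : derivedSeries ↥H (n + 1) ≤ derivedSeries ↥H n := by
        rw [derivedSeries_succ]
        haveI := derivedSeries_normal ↥H n
        exact Subgroup.commutator_le_left _ _
      have hss : ((derivedSeries ↥H (n + 1) : Subgroup ↥H) : Set ↥H) ⊂
          ((derivedSeries ↥H n : Subgroup ↥H) : Set ↥H) :=
        HasSubset.Subset.ssubset_of_ne hle (fun hEq => hcon n (SetLike.coe_injective hEq))
      have e1 : Nat.card ↥(derivedSeries ↥H (n + 1)) =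
          Nat.card ((derivedSeries ↥H (n + 1) : Subgroup ↥H) : Set ↥H) := rfl
      have e2 : Nat.card ↥(derivedSeries ↥H n) =
          Nat.card ((derivedSeries ↥H n : Subgroup ↥H) : Set ↥H) := rfl
      rw [e1, e2, Nat.card_coe_set_eq, Nat.card_coe_set_eq]
      exact Set.ncard_lt_ncard hss (Set.toFinite _)
    have hsum : ∀ n, Nat.card (derivedSeries ↥H n) + n ≤ Nat.card (derivedSeries ↥H 0) := by
      intro n
      induction n with
      | zero => simp
      | succ n ihn =>
        have := hlt n
        omega
    have := hsum (Nat.card (derivedSeries ↥H 0) + 1)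
    omega
  obtain ⟨n, hn⟩ := hstab
  exact ⟨derivedSeries ↥H n, by rw [← derivedSeries_succ, hn], hne n⟩

private lemma stmt17_perfect_not_solvable {G : Type*} [Group G] (P' : Subgroup G)
    (hperf : ⁅P', P'⁆ = P') (hne : P' ≠ ⊥) : ¬ IsSolvable ↥P' := by
  have htop : ∀ m, derivedSeries ↥P' m = ⊤ := by
    intro m
    induction m with
    | zero => rfl
    | succ m ih =>
      rw [derivedSeries_succ, ih]
      apply Subgroup.map_injective P'.subtype_injective
      rw [Subgroup.map_commutator, ← MonoidHom.range_eq_map, Subgroup.range_subtype, hperf]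
  rintro ⟨n, hn⟩
  rw [htop n] at hn
  obtain ⟨g, hg, hgne⟩ : ∃ g, g ∈ P' ∧ g ≠ 1 := by
    by_contra hcon
    push_neg at hcon
    exact hne (Subgroup.eq_bot_iff_forall _ |>.mpr hcon)
  have hmem : (⟨g, hg⟩ : ↥P') ∈ (⊤ : Subgroup ↥P') := trivial
  rw [hn, Subgroup.mem_bot] at hmem
  exact hgne (congrArg Subtype.val hmem)

/-- Fiberwise permutations as a homomorphism. -/
private def stmt17_fibHom (B C : Type) :
    ((ℤ → B) → Equiv.Perm C) →* Equiv.Perm ((ℤ → B) × C) where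
  toFun φ :=
    { toFun := fun p => (p.1, φ p.1 p.2)
      invFun := fun p => (p.1, (φ p.1)⁻¹ p.2)
      left_inv := by rintro ⟨x, a⟩; simp
      right_inv := by rintro ⟨x, a⟩; simp }
  map_one' := Equiv.ext fun p => rfl
  map_mul' φ ψ := Equiv.ext fun p => rfl

end Stmt17Aux4
set_option maxHeartbeats 1000000 in
/-- for `G = P((ℤ → B), H)` with `H ≤ Perm C`: (1) if `H` has derived length
`ℓ` then `G` has derived length `ℓ + 1`; (2) if `H` is not solvable then `G` has no solvable
subgroup of finite index. -/
theorem stmt17 (B C : Type) [Fintype B] [Fintype C] (hB : 2 ≤ Fintype.card B)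
    (H : Subgroup (Equiv.Perm C)) :
    (∀ ℓ : ℕ, derivedSeries ↥H ℓ = ⊥ → derivedSeries ↥H (ℓ - 1) ≠ ⊥ →
      derivedSeries ↥(PGroupFull B ↥H C) (ℓ + 1) = ⊥ ∧
        derivedSeries ↥(PGroupFull B ↥H C) ℓ ≠ ⊥) ∧
    (¬ IsSolvable ↥H →
      ∀ K : Subgroup ↥(PGroupFull B ↥H C), K.index ≠ 0 → ¬ IsSolvable ↥K) := by
  obtain ⟨b₀, b₁, hb⟩ := Fintype.exists_pair_of_one_lt_card (by omega : 1 < Fintype.card B)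
  constructor
  · intro ℓ h1 h2
    cases ℓ with
    | zero => exact absurd h1 h2
    | succ m =>
      have h2' : derivedSeries ↥H m ≠ ⊥ := by simpa using h2
      constructor
      · have hle := stmt17_DD_le_Fib (B := B) H (m + 1)
        rw [h1, Subgroup.map_bot] at hle
        have hB2 : Subgroup.map (PGroupFull B ↥H C).subtype
            (derivedSeries ↥(PGroupFull B ↥H C) (m + 1 + 1)) = ⊥ :=
          le_bot_iff.mp (hle.trans stmt17_FibS_bot)
        exact (Subgroup.map_eq_bot_iff_of_injective _
          (Subgroup.subtype_injective _)).mp hB2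
      · intro hbot
        obtain ⟨g, hgmem, hgne⟩ : ∃ g : ↥H, g ∈ derivedSeries ↥H m ∧ g ≠ 1 := by
          by_contra hcon
          push_neg at hcon
          exact h2' (Subgroup.eq_bot_iff_forall _ |>.mpr fun x hx => hcon x hx)
        obtain ⟨u, hu, hu'⟩ := stmt17_Q_main H hb m g hgmem
        rw [hbot, Subgroup.map_bot, Subgroup.mem_bot] at hu
        subst hu
        obtain ⟨a, ha⟩ : ∃ a : C, (g : Equiv.Perm C) a ≠ a := by
          by_contra hcon
          push_neg at hcon
          exact hgne (Subtype.ext (Equiv.ext fun a => hcon a))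
        set xx : ℤ → B := fun i => if i = 0 then b₁ else b₀ with hxx
        have h1x : xx (-1) = b₀ := by norm_num [hxx]
        have h2x : xx 0 = b₁ := by norm_num [hxx]
        have heval := hu' xx h1x h2x a
        rw [Equiv.Perm.one_apply] at heval
        exact ha ((Prod.mk.injEq _ _ _ _).mp heval).2.symm
  · intro hns K hK
    intro hKsolv
    obtain ⟨P', hperf, hPne⟩ := stmt17_exists_perfect H hns
    have hPns := stmt17_perfect_not_solvable P' hperf hPne
    set N := K.index with hN
    have hNpos : 0 < N := Nat.pos_of_ne_zero hK
    set Iset : Finset ℤ := Finset.univ.image (fun j : Fin N => ((j : ℕ) : ℤ)) with hIset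
    have hInonempty : Iset.Nonempty := by
      refine ⟨((⟨0, hNpos⟩ : Fin N) : ℕ) , ?_⟩
      exact Finset.mem_image_of_mem _ (Finset.mem_univ _)
    set yi : Fin N → ℤ → B := fun i z => if z = ((i : ℕ) : ℤ) then b₁ else b₀ with hyi
    set D : Fin N → Set (ℤ → B) := fun i => {x | ∀ z ∈ Iset, x z = yi i z} with hD
    have hyimem : ∀ i, yi i ∈ D i := fun i z _ => rfl
    have hDdisj : ∀ i j (x : ℤ → B), x ∈ D i → x ∈ D j → i = j := by
      intro i j x hxi hxj
      by_contra hne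
      have hmemI : ((i : ℕ) : ℤ) ∈ Iset :=
        Finset.mem_image_of_mem _ (Finset.mem_univ i)
      have h1 : x ((i : ℕ) : ℤ) = b₁ := by
        have := hxi _ hmemI
        simp only [hyi] at this
        simpa using this
      have h2 : x ((i : ℕ) : ℤ) = b₀ := by
        have hcast : ¬ ((i : ℕ) : ℤ) = ((j : ℕ) : ℤ) := fun hc =>
          hne (Fin.val_injective (Nat.cast_injective hc))
        have := hxj _ hmemI
        simp only [hyi] at this
        rwa [if_neg hcast] at this
      rw [h1] at h2
      exact hb h2.symm
    have hctrlmem : ∀ (i : Fin N) (g : ↥H), g ∈ P' →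
        ctrlFull (A := C) g (D i) ∈ PGroupFull B ↥H C :=
      fun i g hg => stmt17_ctrl_cyl H P' hperf Iset hInonempty (yi i) g hg
    -- the embedding of the product of copies of P'
    set ρ : (Fin N → ↥P') →* ((ℤ → B) → Equiv.Perm C) :=
      { toFun := fun f x =>
          if h : ∃ i, x ∈ D i then ((f h.choose : ↥H) : Equiv.Perm C) else 1
        map_one' := by
          funext x
          by_cases h : ∃ i, x ∈ D i
          · simp [dif_pos h]
          · simp [dif_neg h]
        map_mul' := by
          intro f g
          funext x
          by_cases h : ∃ i, x ∈ D i
          · simp [dif_pos h]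
          · simp [dif_neg h] } with hρ
    set Φ : (Fin N → ↥P') →* Equiv.Perm ((ℤ → B) × C) := (stmt17_fibHom B C).comp ρ with hΦ
    have hΦapply : ∀ f (x : ℤ → B) (a : C), Φ f (x, a) = (x, ρ f x a) := fun f x a => rfl
    have hρapply : ∀ f (x : ℤ → B) (h : ∃ i, x ∈ D i),
        ρ f x = ((f h.choose : ↥H) : Equiv.Perm C) := fun f x h => dif_pos h
    have hρapply_neg : ∀ f (x : ℤ → B), ¬ (∃ i, x ∈ D i) → ρ f x = 1 :=
      fun f x h => dif_neg h
    have hΦG : ∀ f, Φ f ∈ PGroupFull B ↥H C := by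
      have key : ∀ (S : Finset (Fin N)) (f : Fin N → ↥P'), (∀ i ∉ S, f i = 1) →
          Φ f ∈ PGroupFull B ↥H C := by
        intro S
        induction S using Finset.induction_on with
        | empty =>
          intro f hf
          have hf1 : f = 1 := funext fun i => hf i (Finset.notMem_empty i)
          rw [hf1, map_one]
          exact one_mem _
        | @insert j S hjS ih =>
          intro f hf
          have hsplit : f = (Function.update (1 : Fin N → ↥P') j (f j)) *
              (Function.update f j 1) := by
            funext i
            by_cases hij : i = j
            · subst hij; simp
            · simp [Function.update_of_ne hij]
          rw [hsplit, map_mul]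
          refine mul_mem ?_ (ih _ ?_)
          · have heq : Φ (Function.update (1 : Fin N → ↥P') j (f j)) =
                ctrlFull (A := C) ((f j : ↥H)) (D j) := by
              apply Equiv.ext
              rintro ⟨x, a⟩
              rw [hΦapply, stmt17_ctrl_apply]
              by_cases hxj : x ∈ D j
              · have h : ∃ i, x ∈ D i := ⟨j, hxj⟩
                have hch : h.choose = j := hDdisj _ _ x h.choose_spec hxj
                rw [if_pos hxj, hρapply _ _ h, hch]
                simp [Subgroup.smul_def, Equiv.Perm.smul_def]
              · rw [if_neg hxj]
                by_cases h : ∃ i, x ∈ D i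
                · have hch : h.choose ≠ j := fun he => hxj (he ▸ h.choose_spec)
                  rw [hρapply _ _ h, Function.update_of_ne hch]
                  simp
                · rw [hρapply_neg _ _ h]
                  simp
            rw [heq]
            exact hctrlmem j ((f j : ↥H)) (SetLike.coe_mem (f j))
          · intro i hi
            by_cases hij : i = j
            · subst hij; simp
            · rw [Function.update_of_ne hij]
              exact hf i (by simp [hij, hi])
      exact fun f => key Finset.univ f (fun i hi => absurd (Finset.mem_univ i) hi)
    have hΦinj : Function.Injective Φ := by
      rw [injective_iff_map_eq_one]
      intro f hf
      have hall : ∀ i, f i = 1 := by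
        intro i
        have h : ∃ i', yi i ∈ D i' := ⟨i, hyimem i⟩
        have hch : h.choose = i := hDdisj _ _ _ h.choose_spec (hyimem i)
        have hcoe : ((f i : ↥H) : Equiv.Perm C) = 1 := by
          apply Equiv.ext
          intro a
          have := congrArg (fun e : Equiv.Perm ((ℤ → B) × C) => e (yi i, a)) hf
          simp only [hΦapply, Equiv.Perm.one_apply] at this
          rw [hρapply _ _ h, hch] at this
          exact (Prod.mk.injEq _ _ _ _).mp this |>.2
        exact Subtype.ext (Subtype.ext hcoe)
      exact funext hall
    -- restrict to the subgroup
    set Φ' : (Fin N → ↥P') →* ↥(PGroupFull B ↥H C) :=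
      Φ.codRestrict (PGroupFull B ↥H C) hΦG with hΦ'
    have hΦ'inj : Function.Injective Φ' := by
      intro a b hab
      exact hΦinj (congrArg Subtype.val hab)
    set L : Subgroup (Fin N → ↥P') := K.comap Φ' with hL
    -- L is solvable
    haveI hKsolv' : Group.IsSolvable ↥K := hKsolv
    have hLsolv : Group.IsSolvable ↥L := by
      have hψ : ∀ l : ↥L, Φ' (l : Fin N → ↥P') ∈ K := fun l => l.2
      let ψ : ↥L →* ↥K :=
        { toFun := fun l => ⟨Φ' (l : Fin N → ↥P'), hψ l⟩
          map_one' := by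
            apply Subtype.ext
            simp
          map_mul' := by
            intro a b
            apply Subtype.ext
            simp }
      have hψinj : Function.Injective ψ := by
        intro a b h
        have := congrArg Subtype.val h
        exact Subtype.ext (hΦ'inj this)
      exact solvable_of_solvable_injective hψinj
    -- index bound
    have hLind : L.index ≤ N := by
      rw [hL, Subgroup.index_comap]
      have htop : K.relIndex ⊤ ≠ 0 := by
        rw [Subgroup.relIndex_top_right, ← hN]
        exact hK
      have := Subgroup.relIndex_le_of_le_right (le_top : Φ'.range ≤ ⊤) htop
      rwa [Subgroup.relIndex_top_right, ← hN] at this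
    -- counting
    have cardL_pos : 0 < Nat.card ↥L := Nat.card_pos
    have hLcard : Nat.card ↥L * L.index = Nat.card (Fin N → ↥P') := Subgroup.card_mul_index L
    set Sf : Fin N → Subgroup ↥P' :=
      fun i => Subgroup.map (Pi.evalMonoidHom (fun _ : Fin N => ↥P') i) L with hSf
    have hSsolv : ∀ i, IsSolvable ↥(Sf i) := fun i =>
      solvable_of_surjective (MonoidHom.subgroupMap_surjective _ L)
    have hSne : ∀ i, Sf i ≠ ⊤ := by
      intro i htop
      apply hPns
      have h1 : Group.IsSolvable ↥(⊤ : Subgroup ↥P') := htop ▸ hSsolv i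
      exact solvable_of_surjective
        (f := (Subgroup.topEquiv (G := ↥P')).toMonoidHom) Subgroup.topEquiv.surjective
    have hSind : ∀ i, 2 ≤ (Sf i).index := by
      intro i
      have h0 : (Sf i).index ≠ 0 := Subgroup.index_ne_zero_of_finite
      have h1 : (Sf i).index ≠ 1 := fun h => hSne i (Subgroup.index_eq_one.mp h)
      omega
    have hScard : ∀ i, 2 * Nat.card ↥(Sf i) ≤ Nat.card ↥P' := by
      intro i
      calc 2 * Nat.card ↥(Sf i) ≤ (Sf i).index * Nat.card ↥(Sf i) :=
            Nat.mul_le_mul_right _ (hSind i)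
        _ = Nat.card ↥P' := by rw [mul_comm]; exact Subgroup.card_mul_index (Sf i)
    have hLle : Nat.card ↥L ≤ ∏ i : Fin N, Nat.card ↥(Sf i) := by
      have hinj : Function.Injective (fun (l : ↥L) (i : Fin N) =>
          (⟨(l : Fin N → ↥P') i, Subgroup.mem_map_of_mem _ l.2⟩ : ↥(Sf i))) := by
        intro a b h
        apply Subtype.ext
        funext i
        exact congrArg Subtype.val (congrFun h i)
      calc Nat.card ↥L ≤ Nat.card (∀ i : Fin N, ↥(Sf i)) :=
            Nat.card_le_card_of_injective _ hinj
        _ = ∏ i : Fin N, Nat.card ↥(Sf i) := Nat.card_pi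
    -- combine
    have hbig : 2 ^ N * Nat.card ↥L ≤ Nat.card ↥L * N := by
      calc 2 ^ N * Nat.card ↥L ≤ 2 ^ N * ∏ i : Fin N, Nat.card ↥(Sf i) :=
            Nat.mul_le_mul_left _ hLle
        _ = ∏ i : Fin N, (2 * Nat.card ↥(Sf i)) := by
            rw [Finset.prod_mul_distrib, Finset.prod_const, Finset.card_univ,
              Fintype.card_fin]
        _ ≤ ∏ _i : Fin N, Nat.card ↥P' :=
            Finset.prod_le_prod (fun _ _ => Nat.zero_le _) (fun i _ => hScard i)
        _ = Nat.card ↥P' ^ N := by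
            rw [Finset.prod_const, Finset.card_univ, Fintype.card_fin]
        _ = Nat.card (Fin N → ↥P') := by
            rw [Nat.card_pi, Finset.prod_const, Finset.card_univ, Fintype.card_fin]
        _ = Nat.card ↥L * L.index := hLcard.symm
        _ ≤ Nat.card ↥L * N := Nat.mul_le_mul_left _ hLind
    have h2N : 2 ^ N ≤ N := by
      have := hbig
      rw [mul_comm (2 ^ N) (Nat.card ↥L)] at this
      exact Nat.le_of_mul_le_mul_left this cardL_pos
    have := Nat.lt_two_pow_self (n := N)
    omega
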